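/- Let M be a von Neumann algebra acting on a complex Hilbert space H whose center consists only of the scalar multiples of the identity (a factor), and assume M contains a nontrivial symmetric projection. Fix an integer n ≥ 2. Then a bijective map φ: M → M with φ(I) = I and φ(λA) = λφ(A) for all λ ∈ ℂ is a multiplicative *-Lie n-map (i.e., φ(p_{n*}(x₁,…,x_n)) = p_{n*}(φ(x₁),…,φ(x_n)) for all x₁,…,x_n ∈ M) if and only if φ is a *-isomorphism (additive, multiplicative, and star-preserving). -/

import Mathlib

set_option linter.unusedSectionVars false
set_option maxHeartbeats 1000000
set_option synthInstance.maxHeartbeats 400000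

/-- The `*`-Lie product `[x,y]_* = xy - y x*`. -/
def starLie {R : Type*} [Ring R] [StarRing R] (x y : R) : R := x * y - y * star x

/-- `pvec m x = p_{(m+1)*}(x 0, ..., x m)`. -/
def pvec {R : Type*} [Ring R] [StarRing R] : (m : ℕ) → (Fin (m + 1) → R) → R
  | 0, x => x 0
  | m + 1, x => starLie (pvec m (fun i => x i.castSucc)) (x (Fin.last (m + 1)))

section Helpers
variable {R : Type*} [Ring R] [StarRing R] [Algebra ℂ R] [StarModule ℂ R]

private lemma csmul_inj {c : ℂ} (hc : c ≠ 0) {x y : R} (h : c • x = c • y) : x = y := by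
  simpa [smul_smul, inv_mul_cancel₀ hc] using congrArg (fun w => c⁻¹ • w) h

theorem starlie_core (e : R) (heS : star e = e) (heM : e * e = e)
    (hPf : ∀ c : R, (∀ z : R, c * z * (1 - e) = 0) → c = 0)
    (hPe : ∀ c : R, (∀ z : R, c * z * e = 0) → c = 0)
    (ψ : R → R) (hinj : Function.Injective ψ) (hsurj : Function.Surjective ψ)
    (hone : ψ 1 = 1) (hsmul : ∀ (c : ℂ) (x : R), ψ (c • x) = c • ψ x)
    (hdia : ∀ y z : R, ψ (y * z + z * star y) = ψ y * ψ z + ψ z * star (ψ y)) :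
    (∀ a b : R, ψ (a + b) = ψ a + ψ b) ∧ (∀ a b : R, ψ (a * b) = ψ a * ψ b) ∧
      (∀ a : R, ψ (star a) = star (ψ a)) := by
  -- ψ 0 = 0
  have hzero : ψ 0 = 0 := by
    simpa using hsmul 0 0
  have hneg : ∀ x : R, ψ (-x) = - ψ x := by
    intro x
    simpa using hsmul (-1) x
  -- the Lie version
  have hlie : ∀ y z : R, ψ (y * z - z * star y) = ψ y * ψ z - ψ z * star (ψ y) := by
    intro y z
    have h := hdia (Complex.I • y) z
    have harg : (Complex.I • y) * z + z * star (Complex.I • y)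
        = Complex.I • (y * z - z * star y) := by
      simp [smul_mul_assoc, mul_smul_comm, star_smul, Complex.star_def, Complex.conj_I,
        smul_sub, neg_smul, sub_eq_add_neg]
    have hrhs : ψ (Complex.I • y) * ψ z + ψ z * star (ψ (Complex.I • y))
        = Complex.I • (ψ y * ψ z - ψ z * star (ψ y)) := by
      rw [hsmul]
      simp [smul_mul_assoc, mul_smul_comm, star_smul, Complex.star_def, Complex.conj_I,
        smul_sub, neg_smul, sub_eq_add_neg]
    rw [harg, hsmul, hrhs] at h
    exact csmul_inj Complex.I_ne_zero h
  -- star sums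
  have hst1 : ∀ y : R, ψ (y + star y) = ψ y + star (ψ y) := by
    intro y
    simpa [hone] using hdia y 1
  have hst2 : ∀ y : R, ψ (y - star y) = ψ y - star (ψ y) := by
    intro y
    simpa [hone] using hlie y 1
  -- selfadjoint/skew preserved
  have hsa : ∀ a : R, star a = a → star (ψ a) = ψ a := by
    intro a ha
    have := hst2 a
    rw [ha, sub_self, hzero] at this
    exact (sub_eq_zero.mp this.symm).symm
  have hsk : ∀ s : R, star s = -s → star (ψ s) = - ψ s := by
    intro s hs
    have := hst1 s
    rw [hs, add_neg_cancel, hzero] at this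
    exact eq_neg_of_add_eq_zero_right this.symm
  -- additivity selfadjoint + skew
  have haddss : ∀ a s : R, star a = a → star s = -s → ψ (a + s) = ψ a + ψ s := by
    intro a s ha hs
    have h1 : (a + s) + star (a + s) = (2:ℂ) • a := by
      rw [star_add, ha, hs, two_smul]; abel
    have h2 : (a + s) - star (a + s) = (2:ℂ) • s := by
      rw [star_add, ha, hs, two_smul]; abel
    have k1 := hst1 (a + s); rw [h1, hsmul] at k1
    have k2 := hst2 (a + s); rw [h2, hsmul] at k2
    have : (2:ℂ) • ψ (a + s) = (2:ℂ) • (ψ a + ψ s) := by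
      rw [two_smul, smul_add]
      calc ψ (a+s) + ψ (a+s)
          = (ψ (a+s) + star (ψ (a+s))) + (ψ (a+s) - star (ψ (a+s))) := by abel
        _ = (2:ℂ) • ψ a + (2:ℂ) • ψ s := by rw [← k1, ← k2]
    exact csmul_inj two_ne_zero this
  -- star preservation
  have hstar : ∀ x : R, ψ (star x) = star (ψ x) := by
    intro x
    set a : R := (2⁻¹:ℂ) • (x + star x) with hadef
    set s : R := (2⁻¹:ℂ) • (x - star x) with hsdef
    have ha : star a = a := by
      rw [hadef, star_smul, star_add, star_star]
      simp [Complex.star_def, map_inv₀, map_ofNat, add_comm]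
    have hs : star s = -s := by
      rw [hsdef, star_smul, star_sub, star_star]
      simp [Complex.star_def, map_inv₀, map_ofNat]
      rw [← smul_neg, neg_sub]
    have hax : a + s = x := by
      rw [hadef, hsdef, ← smul_add]
      have : (x + star x) + (x - star x) = (2:ℂ) • x := by rw [two_smul]; abel
      rw [this, smul_smul]; norm_num
    have hax' : a + -s = star x := by
      rw [hadef, hsdef, ← smul_neg, ← smul_add]
      have : (x + star x) + -(x - star x) = (2:ℂ) • star x := by rw [two_smul]; abel
      rw [this, smul_smul]; norm_num
    have e1 : ψ x = ψ a + ψ s := by rw [← hax]; exact haddss a s ha hs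
    have e2 : ψ (star x) = ψ a - ψ s := by
      rw [← hax']
      have := haddss a (-s) ha (by rw [star_neg, hs, neg_neg])
      rw [this, hneg]; abel
    rw [e2, e1, star_add, hsa a ha, hsk s hs]; abel
  -- multiplicativity on selfadjoint pairs
  have hmulsa : ∀ a z : R, star a = a → star z = z → ψ (a * z) = ψ a * ψ z := by
    intro a z ha hz
    have hu := hdia a z; rw [ha, hsa a ha] at hu
    have hv := hlie a z; rw [ha, hsa a ha] at hv
    have hsum : (a * z + z * a) + (a * z - z * a) = (2:ℂ) • (a * z) := by
      rw [two_smul]; abel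
    have hsum' : (ψ a * ψ z + ψ z * ψ a) + (ψ a * ψ z - ψ z * ψ a)
        = (2:ℂ) • (ψ a * ψ z) := by rw [two_smul]; abel
    have hss : star (a * z + z * a) = a * z + z * a := by
      rw [star_add, star_mul, star_mul, ha, hz]; abel
    have hks : star (a * z - z * a) = -(a * z - z * a) := by
      rw [star_sub, star_mul, star_mul, ha, hz]; abel
    have := haddss _ _ hss hks
    rw [hu, hv, hsum, hsmul, hsum'] at this
    exact csmul_inj two_ne_zero this
  -- jordan and lie identities with selfadjoint left entry
  have hjord : ∀ a y : R, star a = a → ψ (a * y + y * a) = ψ a * ψ y + ψ y * ψ a := by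
    intro a y ha
    have := hdia a y; rwa [ha, hsa a ha] at this
  have hlie' : ∀ a y : R, star a = a → ψ (a * y - y * a) = ψ a * ψ y - ψ y * ψ a := by
    intro a y ha
    have := hlie a y; rwa [ha, hsa a ha] at this
  -- the complementary projection
  set f : R := 1 - e with hfdef
  have hfS : star f = f := by rw [hfdef, star_sub, star_one, heS]
  have hfM : f * f = f := by
    have h1 : (1 - e) * (1 - e) = 1 - e - e + e * e := by noncomm_ring
    rw [hfdef, h1, heM]; abel
  have hef : e * f = 0 := by rw [hfdef, mul_sub, heM, mul_one, sub_self]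
  have hfe : f * e = 0 := by rw [hfdef, sub_mul, heM, one_mul, sub_self]
  have hef1 : e + f = 1 := by rw [hfdef]; abel
  -- sandwich helper
  have sand : ∀ p q u v x : R, p * x * q = x → u * x * v = (u * p) * x * (q * v) := by
    intro p q u v x h
    conv_lhs => rw [← h]
    simp only [mul_assoc]
  have hES : star (ψ e) = ψ e := hsa e heS
  have hFS : star (ψ f) = ψ f := hsa f hfS
  have hEM : ψ e * ψ e = ψ e := by rw [← hmulsa e e heS heS, heM]
  have hFM : ψ f * ψ f = ψ f := by rw [← hmulsa f f hfS hfS, hfM]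
  have hEF : ψ e * ψ f = 0 := by rw [← hmulsa e f heS hfS, hef, hzero]
  have hFE : ψ f * ψ e = 0 := by rw [← hmulsa f e hfS heS, hfe, hzero]
  have hEF1 : ψ e + ψ f = 1 := by
    obtain ⟨t, ht⟩ := hsurj (ψ e + ψ f)
    have htS : star t = t := by
      apply hinj
      rw [hstar, ht, star_add, hES, hFS]
    have h1 : t * e = e := by
      apply hinj
      rw [hmulsa t e htS heS, ht, add_mul, hEM, hFE, add_zero]
    have h2 : t * f = f := by
      apply hinj
      rw [hmulsa t f htS hfS, ht, add_mul, hEF, hFM, zero_add]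
    have ht1 : t = 1 := by
      calc t = t * 1 := (mul_one t).symm
        _ = t * e + t * f := by rw [← hef1, mul_add]
        _ = e + f := by rw [h1, h2]
        _ = 1 := hef1
    rw [← ht, ht1, hone]
  -- corner formulas
  have hcorner : ∀ p t : R, star p = p → p * p = p → star t = t →
      ψ (p * t * p) = ψ p * ψ t * ψ p := by
    intro p t hpS hpM htS
    have h := hdia (p * t) p
    have harg : (p * t) * p + p * star (p * t) = (2:ℂ) • (p * t * p) := by
      rw [star_mul, htS, hpS, two_smul]
      simp only [mul_assoc]
    have hpt : ψ (p * t) = ψ p * ψ t := hmulsa p t hpS htS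
    have htp : ψ (t * p) = ψ t * ψ p := hmulsa t p htS hpS
    have hstpt : star (ψ (p * t)) = ψ t * ψ p := by
      rw [← hstar, star_mul, htS, hpS, htp]
    rw [hstpt, harg, hsmul, hpt] at h
    have h2 : (2:ℂ) • ψ (p * t * p) = (2:ℂ) • (ψ p * ψ t * ψ p) := by
      rw [h, two_smul]
      simp only [mul_assoc]
    exact csmul_inj two_ne_zero h2
  have hoffc : ∀ t : R, star t = t →
      ψ (e * t * f + f * t * e) = ψ e * ψ t * ψ f + ψ f * ψ t * ψ e := by
    intro t htS
    have h := hdia (e * t) f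
    have harg : (e * t) * f + f * star (e * t) = e * t * f + f * t * e := by
      rw [star_mul, htS, heS]
      simp only [mul_assoc]
    have hstet : star (ψ (e * t)) = ψ t * ψ e := by
      rw [← hstar, star_mul, htS, heS, hmulsa t e htS heS]
    rw [hstet, harg, hmulsa e t heS htS] at h
    rw [h]
    simp only [mul_assoc]
  have hdecomp : ∀ t : R, star t = t →
      ψ t = ψ (e * t * e) + ψ (e * t * f + f * t * e) + ψ (f * t * f) := by
    intro t htS
    rw [hcorner e t heS heM htS, hcorner f t hfS hfM htS, hoffc t htS]
    have h0 : (ψ e + ψ f) * ψ t * (ψ e + ψ f) = ψ t := by rw [hEF1, one_mul, mul_one]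
    calc ψ t = (ψ e + ψ f) * ψ t * (ψ e + ψ f) := h0.symm
      _ = ψ e * ψ t * ψ e + (ψ e * ψ t * ψ f + ψ f * ψ t * ψ e) + ψ f * ψ t * ψ f := by
          noncomm_ring
  -- associativity helpers
  have z3 : ∀ x : R, e * (f * x) = 0 := fun x => by rw [← mul_assoc, hef, zero_mul]
  have z4 : ∀ x : R, f * (e * x) = 0 := fun x => by rw [← mul_assoc, hfe, zero_mul]
  have a1 : ∀ x : R, e * (e * x) = e * x := fun x => by rw [← mul_assoc, heM]
  have a3 : ∀ x : R, f * (f * x) = f * x := fun x => by rw [← mul_assoc, hfM]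
  -- corner image lemmas
  have himg12 : ∀ m : R, e * m * f = m → ψ m = ψ e * ψ m * ψ f := by
    intro m hm
    have hem : e * m = m := by
      conv_lhs => rw [← hm]
      simp only [mul_assoc, a1]
      rw [← mul_assoc, hm]
    have hme : m * e = 0 := by
      conv_lhs => rw [← hm]
      simp only [mul_assoc, hfe, mul_zero]
    have hmf : m * f = m := by
      conv_lhs => rw [← hm]
      simp only [mul_assoc, hfM]
      rw [← mul_assoc, hm]
    have hfm : f * m = 0 := by
      conv_lhs => rw [← hm]
      simp only [← mul_assoc, hfe, zero_mul]
    have k1 := hdia e m; rw [heS, hES, hem, hme, add_zero] at k1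
    have k2 := hlie e m; rw [heS, hES, hem, hme, sub_zero] at k2
    have hmE0 : ψ m * ψ e = 0 := by
      have h := k1.symm.trans k2
      rw [sub_eq_add_neg] at h
      have h4 := add_left_cancel h
      have h5 : ψ m * ψ e + ψ m * ψ e = 0 := eq_neg_iff_add_eq_zero.mp h4
      have h6 : (2:ℂ) • (ψ m * ψ e) = (2:ℂ) • (0:R) := by
        rw [two_smul, smul_zero, h5]
      exact csmul_inj two_ne_zero h6
    have k3 := hdia f m; rw [hfS, hFS, hfm, hmf, zero_add] at k3
    have k4 := hlie f m; rw [hfS, hFS, hfm, hmf, zero_sub, hneg] at k4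
    have hFm0 : ψ f * ψ m = 0 := by
      have hh : (ψ f * ψ m + ψ m * ψ f) + (ψ f * ψ m - ψ m * ψ f) = 0 := by
        rw [← k3, ← k4]; abel
      have h5 : ψ f * ψ m + ψ f * ψ m = 0 := by
        calc ψ f * ψ m + ψ f * ψ m
            = (ψ f * ψ m + ψ m * ψ f) + (ψ f * ψ m - ψ m * ψ f) := by abel
          _ = 0 := hh
      have h6 : (2:ℂ) • (ψ f * ψ m) = (2:ℂ) • (0:R) := by
        rw [two_smul, smul_zero, h5]
      exact csmul_inj two_ne_zero h6
    have hEm : ψ m = ψ e * ψ m := by rw [hmE0, add_zero] at k1; exact k1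
    have hmF : ψ m = ψ m * ψ f := by rw [hFm0, zero_add] at k3; exact k3
    calc ψ m = ψ e * ψ m := hEm
      _ = ψ e * (ψ m * ψ f) := by rw [← hmF]
      _ = ψ e * ψ m * ψ f := by rw [mul_assoc]
  have himg21 : ∀ m : R, f * m * e = m → ψ m = ψ f * ψ m * ψ e := by
    intro m hm
    have hsm : e * star m * f = star m := by
      have h2 := congrArg star hm
      simp only [star_mul, heS, hfS] at h2
      rw [← mul_assoc] at h2
      exact h2
    have h3 := himg12 (star m) hsm
    rw [hstar] at h3
    have h4 := congrArg star h3
    simp only [star_mul, star_star, hES, hFS] at h4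
    rw [← mul_assoc] at h4
    exact h4
  -- corner computations for triples
  have c11 : ∀ d₁ o d₂ : R, e * d₁ * e = d₁ → e * o * f + f * o * e = o → f * d₂ * f = d₂ →
      e * (d₁ + o + d₂) * e = d₁ := by
    intro d₁ o d₂ h1 h0 h2
    conv_lhs => rw [← h1, ← h0, ← h2]
    simp only [mul_add, add_mul, mul_assoc, a1, a3, z3, z4, heM, hfM, hef, hfe,
      mul_zero, zero_mul, add_zero, zero_add]
    rw [← mul_assoc, h1]
  have c22 : ∀ d₁ o d₂ : R, e * d₁ * e = d₁ → e * o * f + f * o * e = o → f * d₂ * f = d₂ →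
      f * (d₁ + o + d₂) * f = d₂ := by
    intro d₁ o d₂ h1 h0 h2
    conv_lhs => rw [← h1, ← h0, ← h2]
    simp only [mul_add, add_mul, mul_assoc, a1, a3, z3, z4, heM, hfM, hef, hfe,
      mul_zero, zero_mul, add_zero, zero_add]
    rw [← mul_assoc, h2]
  have coff : ∀ d₁ o d₂ : R, e * d₁ * e = d₁ → e * o * f + f * o * e = o → f * d₂ * f = d₂ →
      e * (d₁ + o + d₂) * f + f * (d₁ + o + d₂) * e = o := by
    intro d₁ o d₂ h1 h0 h2
    conv_lhs => rw [← h1, ← h0, ← h2]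
    simp only [mul_add, add_mul, mul_assoc, a1, a3, z3, z4, heM, hfM, hef, hfe,
      mul_zero, zero_mul, add_zero, zero_add]
    rw [← mul_assoc, ← mul_assoc, h0]
  -- additivity for selfadjoint corner triples
  have hmixsa : ∀ d₁ o d₂ : R, star d₁ = d₁ → star o = o → star d₂ = d₂ →
      e * d₁ * e = d₁ → e * o * f + f * o * e = o → f * d₂ * f = d₂ →
      ψ (d₁ + o + d₂) = ψ d₁ + ψ o + ψ d₂ := by
    intro d₁ o d₂ hS1 hS0 hS2 h1 h0 h2
    have htS : star (d₁ + o + d₂) = d₁ + o + d₂ := by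
      rw [star_add, star_add, hS1, hS0, hS2]
    have hd := hdecomp (d₁ + o + d₂) htS
    rw [c11 d₁ o d₂ h1 h0 h2, coff d₁ o d₂ h1 h0 h2, c22 d₁ o d₂ h1 h0 h2] at hd
    exact hd
  -- corner-condition transport
  have hC1star : ∀ x : R, e * x * e = x → e * star x * e = star x := by
    intro x h
    have h2 := congrArg star h
    simp only [star_mul, heS] at h2
    rw [← mul_assoc] at h2; exact h2
  have hC2star : ∀ x : R, f * x * f = x → f * star x * f = star x := by
    intro x h
    have h2 := congrArg star h
    simp only [star_mul, hfS] at h2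
    rw [← mul_assoc] at h2; exact h2
  have hC0star : ∀ x : R, e * x * f + f * x * e = x →
      e * star x * f + f * star x * e = star x := by
    intro x h
    have h2 := congrArg star h
    simp only [star_add, star_mul, heS, hfS] at h2
    rw [← mul_assoc, ← mul_assoc, add_comm] at h2; exact h2
  have hC1smul : ∀ (c : ℂ) (x : R), e * x * e = x → e * (c • x) * e = c • x := by
    intro c x h; rw [mul_smul_comm, smul_mul_assoc, h]
  have hC2smul : ∀ (c : ℂ) (x : R), f * x * f = x → f * (c • x) * f = c • x := by
    intro c x h; rw [mul_smul_comm, smul_mul_assoc, h]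
  have hC0smul : ∀ (c : ℂ) (x : R), e * x * f + f * x * e = x →
      e * (c • x) * f + f * (c • x) * e = c • x := by
    intro c x h
    rw [mul_smul_comm, smul_mul_assoc, mul_smul_comm, smul_mul_assoc, ← smul_add, h]
  have hC1add : ∀ x y : R, e * x * e = x → e * y * e = y → e * (x + y) * e = x + y := by
    intro x y hx hy; rw [mul_add, add_mul, hx, hy]
  have hC2add : ∀ x y : R, f * x * f = x → f * y * f = y → f * (x + y) * f = x + y := by
    intro x y hx hy; rw [mul_add, add_mul, hx, hy]
  have hC0add : ∀ x y : R, e * x * f + f * x * e = x → e * y * f + f * y * e = y →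
      e * (x + y) * f + f * (x + y) * e = x + y := by
    intro x y hx hy
    have h3 : e * (x + y) * f + f * (x + y) * e
        = (e * x * f + f * x * e) + (e * y * f + f * y * e) := by
      simp only [mul_add, add_mul]; abel
    rw [h3, hx, hy]
  have hC1sub : ∀ x y : R, e * x * e = x → e * y * e = y → e * (x - y) * e = x - y := by
    intro x y hx hy
    have := hC1add x (-y) hx (by simpa [neg_one_smul] using hC1smul (-1) y hy)
    simpa [sub_eq_add_neg] using this
  have hC2sub : ∀ x y : R, f * x * f = x → f * y * f = y → f * (x - y) * f = x - y := by
    intro x y hx hy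
    have := hC2add x (-y) hx (by simpa [neg_one_smul] using hC2smul (-1) y hy)
    simpa [sub_eq_add_neg] using this
  have hC0sub : ∀ x y : R, e * x * f + f * x * e = x → e * y * f + f * y * e = y →
      e * (x - y) * f + f * (x - y) * e = x - y := by
    intro x y hx hy
    have := hC0add x (-y) hx (by simpa [neg_one_smul] using hC0smul (-1) y hy)
    simpa [sub_eq_add_neg] using this
  -- splitting into selfadjoint pieces
  have hresum : ∀ x : R, (2⁻¹:ℂ) • (x + star x) + (2⁻¹:ℂ) • (x - star x) = x := by
    intro x
    rw [← smul_add]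
    have h : (x + star x) + (x - star x) = (2:ℂ) • x := by rw [two_smul]; abel
    rw [h, smul_smul]; norm_num
  have hreS : ∀ x : R, star ((2⁻¹:ℂ) • (x + star x)) = (2⁻¹:ℂ) • (x + star x) := by
    intro x
    rw [star_smul, star_add, star_star]
    simp [Complex.star_def, map_inv₀, map_ofNat, add_comm]
  have hskS : ∀ x : R, star ((2⁻¹:ℂ) • (x - star x)) = -((2⁻¹:ℂ) • (x - star x)) := by
    intro x
    rw [star_smul, star_sub, star_star]
    simp [Complex.star_def, map_inv₀, map_ofNat]
    rw [← smul_neg, neg_sub]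
  have split : ∀ x : R, star ((2⁻¹:ℂ) • (x + star x)) = (2⁻¹:ℂ) • (x + star x) ∧
      star ((-Complex.I) • ((2⁻¹:ℂ) • (x - star x))) = (-Complex.I) • ((2⁻¹:ℂ) • (x - star x)) ∧
      x = (2⁻¹:ℂ) • (x + star x) + Complex.I • ((-Complex.I) • ((2⁻¹:ℂ) • (x - star x))) ∧
      ψ x = ψ ((2⁻¹:ℂ) • (x + star x)) + Complex.I • ψ ((-Complex.I) • ((2⁻¹:ℂ) • (x - star x))) := by
    intro x
    have hIb : Complex.I • ((-Complex.I) • ((2⁻¹:ℂ) • (x - star x))) = (2⁻¹:ℂ) • (x - star x) := by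
      rw [smul_smul, mul_neg, Complex.I_mul_I, neg_neg, one_smul]
    have hbS : star ((-Complex.I) • ((2⁻¹:ℂ) • (x - star x)))
        = (-Complex.I) • ((2⁻¹:ℂ) • (x - star x)) := by
      rw [star_smul, hskS]
      simp [Complex.star_def, Complex.conj_I]
    refine ⟨hreS x, hbS, ?_, ?_⟩
    · rw [hIb, hresum]
    · conv_lhs => rw [← hresum x, ← hIb]
      have hsk2 : star (Complex.I • ((-Complex.I) • ((2⁻¹:ℂ) • (x - star x))))
          = -(Complex.I • ((-Complex.I) • ((2⁻¹:ℂ) • (x - star x)))) := by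
        rw [hIb, hskS, ← hIb]
      rw [haddss _ _ (hreS x) hsk2, hsmul Complex.I]
  -- general mixed-corner additivity
  have hmixg : ∀ p₁ q p₂ : R, e * p₁ * e = p₁ → e * q * f + f * q * e = q → f * p₂ * f = p₂ →
      ψ (p₁ + q + p₂) = ψ p₁ + ψ q + ψ p₂ := by
    intro p₁ q p₂ h1 h0 h2
    obtain ⟨hA1S, hB1S, hx1, hps1⟩ := split p₁
    obtain ⟨hA0S, hB0S, hx0, hps0⟩ := split q
    obtain ⟨hA2S, hB2S, hx2, hps2⟩ := split p₂
    -- notation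
    set A1 : R := (2⁻¹:ℂ) • (p₁ + star p₁) with hA1
    set A0 : R := (2⁻¹:ℂ) • (q + star q) with hA0
    set A2 : R := (2⁻¹:ℂ) • (p₂ + star p₂) with hA2
    set B1 : R := (-Complex.I) • ((2⁻¹:ℂ) • (p₁ - star p₁)) with hB1
    set B0 : R := (-Complex.I) • ((2⁻¹:ℂ) • (q - star q)) with hB0
    set B2 : R := (-Complex.I) • ((2⁻¹:ℂ) • (p₂ - star p₂)) with hB2
    -- corner conditions
    have hcA1 : e * A1 * e = A1 :=
      hC1smul _ _ (hC1add _ _ h1 (hC1star _ h1))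
    have hcB1 : e * B1 * e = B1 :=
      hC1smul _ _ (hC1smul _ _ (hC1sub _ _ h1 (hC1star _ h1)))
    have hcA0 : e * A0 * f + f * A0 * e = A0 :=
      hC0smul _ _ (hC0add _ _ h0 (hC0star _ h0))
    have hcB0 : e * B0 * f + f * B0 * e = B0 :=
      hC0smul _ _ (hC0smul _ _ (hC0sub _ _ h0 (hC0star _ h0)))
    have hcA2 : f * A2 * f = A2 :=
      hC2smul _ _ (hC2add _ _ h2 (hC2star _ h2))
    have hcB2 : f * B2 * f = B2 :=
      hC2smul _ _ (hC2smul _ _ (hC2sub _ _ h2 (hC2star _ h2)))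
    have hsum : p₁ + q + p₂ = (A1 + A0 + A2) + Complex.I • (B1 + B0 + B2) := by
      conv_lhs => rw [hx1, hx0, hx2]
      rw [smul_add, smul_add]
      abel
    have hAsa : star (A1 + A0 + A2) = A1 + A0 + A2 := by
      rw [star_add, star_add, hA1S, hA0S, hA2S]
    have hBsa : star (B1 + B0 + B2) = B1 + B0 + B2 := by
      rw [star_add, star_add, hB1S, hB0S, hB2S]
    have hIBsk : star (Complex.I • (B1 + B0 + B2)) = -(Complex.I • (B1 + B0 + B2)) := by
      rw [star_smul, hBsa, Complex.star_def, Complex.conj_I, neg_smul]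
    calc ψ (p₁ + q + p₂)
        = ψ ((A1 + A0 + A2) + Complex.I • (B1 + B0 + B2)) := by rw [← hsum]
      _ = ψ (A1 + A0 + A2) + Complex.I • ψ (B1 + B0 + B2) := by
          rw [haddss _ _ hAsa hIBsk, hsmul]
      _ = (ψ A1 + ψ A0 + ψ A2) + Complex.I • (ψ B1 + ψ B0 + ψ B2) := by
          rw [hmixsa A1 A0 A2 hA1S hA0S hA2S hcA1 hcA0 hcA2,
            hmixsa B1 B0 B2 hB1S hB0S hB2S hcB1 hcB0 hcB2]
      _ = (ψ A1 + Complex.I • ψ B1) + (ψ A0 + Complex.I • ψ B0)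
            + (ψ A2 + Complex.I • ψ B2) := by
          rw [smul_add, smul_add]; abel
      _ = ψ p₁ + ψ q + ψ p₂ := by rw [← hps1, ← hps0, ← hps2]
  -- additivity of x + star x
  have hplus_star : ∀ x : R, ψ (x + star x) = ψ x + ψ (star x) := by
    intro x
    rw [hst1, hstar]
  -- generic facts about off-diagonal corner elements
  have pbasic : ∀ e' f' x : R, e' * e' = e' → f' * f' = f' → e' * f' = 0 → f' * e' = 0 →
      e' * x * f' = x → (e' * x = x ∧ x * e' = 0 ∧ x * f' = x ∧ f' * x = 0) := by
    intro e' f' x he' hf' hef' hfe' hx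
    refine ⟨?_, ?_, ?_, ?_⟩
    · conv_lhs => rw [← hx]
      rw [show e' * (e' * x * f') = (e' * e') * x * f' by simp only [mul_assoc], he', hx]
    · conv_lhs => rw [← hx]
      rw [show (e' * x * f') * e' = e' * x * (f' * e') by simp only [mul_assoc], hfe', mul_zero]
    · conv_lhs => rw [← hx]
      rw [show (e' * x * f') * f' = e' * x * (f' * f') by simp only [mul_assoc], hf', hx]
    · conv_lhs => rw [← hx]
      rw [show f' * (e' * x * f') = (f' * e') * (x * f') by simp only [mul_assoc], hfe', zero_mul]
  have p12mul : ∀ e' f' x y : R, e' * e' = e' → f' * f' = f' → e' * f' = 0 → f' * e' = 0 →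
      e' * x * f' = x → e' * y * f' = y → x * y = 0 := by
    intro e' f' x y he' hf' hef' hfe' hx hy
    obtain ⟨hex, hxe, hxf, hfx⟩ := pbasic e' f' x he' hf' hef' hfe' hx
    obtain ⟨hey, hye, hyf, hfy⟩ := pbasic e' f' y he' hf' hef' hfe' hy
    calc x * y = (x * f') * (e' * y) := by rw [hxf, hey]
      _ = x * (f' * (e' * y)) := by simp only [mul_assoc]
      _ = 0 := by rw [← mul_assoc f', hfe', zero_mul, mul_zero]
  have hstar12 : ∀ x : R, e * x * f = x → f * star x * e = star x := by
    intro x h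
    have h2 := congrArg star h
    simp only [star_mul, heS, hfS] at h2
    rw [← mul_assoc] at h2; exact h2
  have hC0of12 : ∀ x : R, e * x * f = x → e * x * f + f * x * e = x := by
    intro x h
    obtain ⟨hex, hxe, hxf, hfx⟩ := pbasic e f x heM hfM hef hfe h
    rw [h, hfx, zero_mul, add_zero]
  -- additivity on the 1-2 corner
  have hadd12 : ∀ m n : R, e * m * f = m → e * n * f = n → ψ (m + n) = ψ m + ψ n := by
    intro m n hm hn
    obtain ⟨hem, hme, hmf, hfm⟩ := pbasic e f m heM hfM hef hfe hm
    obtain ⟨hen, hne, hnf, hfn⟩ := pbasic e f n heM hfM hef hfe hn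
    have hsm21 : f * star m * e = star m := hstar12 m hm
    have hsn21 : f * star n * e = star n := hstar12 n hn
    obtain ⟨hfsm, hsmf, hsme, hesm⟩ := pbasic f e (star m) hfM heM hfe hef hsm21
    obtain ⟨hfsn, hsnf, hsne, hesn⟩ := pbasic f e (star n) hfM heM hfe hef hsn21
    have hmn : m * n = 0 := p12mul e f m n heM hfM hef hfe hm hn
    have hnm : n * m = 0 := p12mul e f n m heM hfM hef hfe hn hm
    have hsnsm : star n * star m = 0 := by
      have h2 := congrArg star hmn
      simp only [star_mul, star_zero] at h2; exact h2
    -- image level facts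
    have hmIm : e * (m + n) * f = m + n := by rw [mul_add, add_mul, hm, hn]
    have hXim : ψ (m + n) = ψ e * ψ (m + n) * ψ f := himg12 (m + n) hmIm
    have hMim : ψ m = ψ e * ψ m * ψ f := himg12 m hm
    have hNim : ψ n = ψ e * ψ n * ψ f := himg12 n hn
    obtain ⟨hEm', hmE', hmF', hFm'⟩ := pbasic (ψ e) (ψ f) (ψ m) hEM hFM hEF hFE hMim.symm
    obtain ⟨hEn', hnE', hnF', hFn'⟩ := pbasic (ψ e) (ψ f) (ψ n) hEM hFM hEF hFE hNim.symm
    obtain ⟨hEX', hXE', hXF', hFX'⟩ := pbasic (ψ e) (ψ f) (ψ (m + n)) hEM hFM hEF hFE hXim.symm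
    have hsmIm : star (ψ m) = ψ f * star (ψ m) * ψ e := by
      rw [← hstar]
      exact himg21 (star m) hsm21
    have hsnIm : star (ψ n) = ψ f * star (ψ n) * ψ e := by
      rw [← hstar]
      exact himg21 (star n) hsn21
    have hsXIm : star (ψ (m + n)) = ψ f * star (ψ (m + n)) * ψ e := by
      rw [← hstar]
      exact himg21 (star (m + n)) (hstar12 (m + n) hmIm)
    obtain ⟨hFsm', hsmF', hsmE', hEsm'⟩ :=
      pbasic (ψ f) (ψ e) (star (ψ m)) hFM hEM hFE hEF hsmIm.symm
    obtain ⟨hFsn', hsnF', hsnE', hEsn'⟩ :=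
      pbasic (ψ f) (ψ e) (star (ψ n)) hFM hEM hFE hEF hsnIm.symm
    obtain ⟨hFsX', hsXF', hsXE', hEsX'⟩ :=
      pbasic (ψ f) (ψ e) (star (ψ (m + n))) hFM hEM hFE hEF hsXIm.symm
    have hNM0 : ψ n * ψ m = 0 :=
      p12mul (ψ e) (ψ f) (ψ n) (ψ m) hEM hFM hEF hFE hNim.symm hMim.symm
    have hsnsm' : star (ψ n) * star (ψ m) = 0 := by
      have h2 := congrArg star (p12mul (ψ e) (ψ f) (ψ m) (ψ n) hEM hFM hEF hFE hMim.symm hNim.symm)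
      simp only [star_mul, star_zero] at h2; exact h2
    -- ψ (m * star n) = ψ m * star (ψ n)
    have hmn2 : ψ (m * star n) = ψ m * star (ψ n) := by
      have h := hdia n m
      rw [hnm, zero_add, hNM0, zero_add] at h
      exact h
    -- corner condition for m * star n + n * star m
    have hC1cross : e * (m * star n + n * star m) * e = m * star n + n * star m := by
      have t1 : e * (m * star n) * e = m * star n := by
        rw [show e * (m * star n) * e = (e * m) * (star n * e) by simp only [mul_assoc], hem, hsne]
      have t2 : e * (n * star m) * e = n * star m := by
        rw [show e * (n * star m) * e = (e * n) * (star m * e) by simp only [mul_assoc], hen, hsme]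
      rw [mul_add, add_mul, t1, t2]
    -- the master identity
    have harg : (e + m) * (n + star n + f) + (n + star n + f) * (e + star m)
        = (m * star n + n * star m) + ((m + n) + star (m + n)) + 0 := by
      simp only [mul_add, add_mul, star_add]
      rw [hen, hesn, hef, hmn, hmf, hne, hsne, hsnsm, hfe, hfsm]
      abel
    have hy : ψ (e + m) = ψ e + ψ m := by
      have h3 : e * e * e = e := by rw [heM, heM]
      have := hmixg e m 0 h3 (hC0of12 m hm) (by rw [mul_zero, zero_mul])
      rw [add_zero, hzero, add_zero] at this
      exact this
    have hz : ψ (n + star n + f) = ψ n + star (ψ n) + ψ f := by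
      have h3 : f * f * f = f := by rw [hfM, hfM]
      have h4 : e * (0:R) * e = 0 := by rw [mul_zero, zero_mul]
      have := hmixg 0 (n + star n) f h4
        (hC0add _ _ (hC0of12 n hn) (hC0star n (hC0of12 n hn))) h3
      rw [hzero, zero_add, zero_add] at this
      rw [this, hst1]
    have hyst : star (ψ (e + m)) = ψ e + star (ψ m) := by
      rw [hy, star_add, hES]
    have hyst' : ψ (star (e + m)) = ψ (e + star m) := by
      rw [star_add, heS]
    -- apply hdia
    have key := hdia (e + m) (n + star n + f)
    rw [show star (e + m) = e + star m by rw [star_add, heS]] at key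
    rw [harg] at key
    -- left side via hmixg
    have hC0big : e * ((m + n) + star (m + n)) * f + f * ((m + n) + star (m + n)) * e
        = (m + n) + star (m + n) := by
      exact hC0add _ _ (hC0of12 (m + n) hmIm) (hC0star (m + n) (hC0of12 (m + n) hmIm))
    have hlhs : ψ ((m * star n + n * star m) + ((m + n) + star (m + n)) + 0)
        = (ψ (m * star n) + star (ψ (m * star n)))
          + (ψ (m + n) + star (ψ (m + n))) := by
      have h4 : f * (0:R) * f = 0 := by rw [mul_zero, zero_mul]
      rw [hmixg _ _ _ hC1cross hC0big h4, hzero, add_zero]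
      have hcross : m * star n + n * star m = (m * star n) + star (m * star n) := by
        rw [star_mul, star_star]
      rw [hcross, hst1, hst1]
    rw [hlhs, hyst, hy, hz] at key
    -- expand the right-hand side of key
    have hrhs : (ψ e + ψ m) * (ψ n + star (ψ n) + ψ f)
          + (ψ n + star (ψ n) + ψ f) * (ψ e + star (ψ m))
        = (ψ m * star (ψ n) + ψ n * star (ψ m)) + ((ψ m + ψ n) + (star (ψ m) + star (ψ n))) := by
      simp only [mul_add, add_mul]
      rw [hEn', hEsn', hEF,
        p12mul (ψ e) (ψ f) (ψ m) (ψ n) hEM hFM hEF hFE hMim.symm hNim.symm,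
        hmF', hnE', hsnE', hsnsm', hFE, hFsm']
      abel
    rw [hrhs] at key
    -- cancel and project
    have hmns : star (ψ (m * star n)) = ψ n * star (ψ m) := by
      rw [hmn2, star_mul, star_star]
    rw [hmns, hmn2] at key
    have key2 : ψ (m + n) + star (ψ (m + n)) = (ψ m + ψ n) + (star (ψ m) + star (ψ n)) :=
      add_left_cancel key
    -- multiply by ψ e on the left and ψ f on the right
    have final := congrArg (fun w => ψ e * w * ψ f) key2
    simp only [mul_add, add_mul] at final
    rw [show ψ e * ψ (m + n) * ψ f = ψ (m+n) from hXim.symm] at final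
    rw [show ψ e * star (ψ (m + n)) * ψ f = 0 by rw [hEsX', zero_mul]] at final
    rw [show ψ e * ψ m * ψ f = ψ m from hMim.symm] at final
    rw [show ψ e * ψ n * ψ f = ψ n from hNim.symm] at final
    rw [show ψ e * star (ψ m) * ψ f = 0 by rw [hEsm', zero_mul]] at final
    rw [show ψ e * star (ψ n) * ψ f = 0 by rw [hEsn', zero_mul]] at final
    simpa using final
  -- additivity on the 2-1 corner
  have hstar21 : ∀ x : R, f * x * e = x → e * star x * f = star x := by
    intro x h
    have h2 := congrArg star h
    simp only [star_mul, heS, hfS] at h2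
    rw [← mul_assoc] at h2; exact h2
  have hadd21 : ∀ m n : R, f * m * e = m → f * n * e = n → ψ (m + n) = ψ m + ψ n := by
    intro m n hm hn
    have h := hadd12 (star m) (star n) (hstar21 m hm) (hstar21 n hn)
    rw [← star_add, hstar, hstar, hstar] at h
    have h2 := congrArg star h
    simp only [star_add, star_star] at h2
    exact h2
  -- left/right absorption for diagonal corners
  have c1left : ∀ x : R, e * x * e = x → e * x = x := by
    intro x h
    conv_lhs => rw [← h]
    rw [show e * (e * x * e) = (e * e) * x * e by simp only [mul_assoc], heM, h]
  have c1right : ∀ x : R, e * x * e = x → x * e = x := by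
    intro x h
    conv_lhs => rw [← h]
    rw [show (e * x * e) * e = e * x * (e * e) by simp only [mul_assoc], heM, h]
  have c2left : ∀ x : R, f * x * f = x → f * x = x := by
    intro x h
    conv_lhs => rw [← h]
    rw [show f * (f * x * f) = (f * f) * x * f by simp only [mul_assoc], hfM, h]
  have c2right : ∀ x : R, f * x * f = x → x * f = x := by
    intro x h
    conv_lhs => rw [← h]
    rw [show (f * x * f) * f = f * x * (f * f) by simp only [mul_assoc], hfM, h]
  -- additivity on the diagonal corners
  have hadd11 : ∀ x y : R, star x = x → star y = y → e * x * e = x → e * y * e = y →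
      ψ (x + y) = ψ x + ψ y := by
    intro x y hxS hyS hx hy
    obtain ⟨t, ht⟩ := hsurj (ψ x + ψ y)
    have htS : star t = t := hinj (by rw [hstar, ht, star_add, hsa x hxS, hsa y hyS])
    have hxIm : ψ x = ψ e * ψ x * ψ e := by
      have h2 := hcorner e x heS heM hxS
      rw [hx] at h2; exact h2
    have hyIm : ψ y = ψ e * ψ y * ψ e := by
      have h2 := hcorner e y heS heM hyS
      rw [hy] at h2; exact h2
    -- zero f-corner and off-corner of the image
    have hFx : ψ f * ψ x * ψ f = 0 := by
      rw [hxIm, show ψ f * (ψ e * ψ x * ψ e) * ψ f = (ψ f * ψ e) * (ψ x * ψ e * ψ f)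
        by simp only [mul_assoc], hFE, zero_mul]
    have hFy : ψ f * ψ y * ψ f = 0 := by
      rw [hyIm, show ψ f * (ψ e * ψ y * ψ e) * ψ f = (ψ f * ψ e) * (ψ y * ψ e * ψ f)
        by simp only [mul_assoc], hFE, zero_mul]
    have hEFx : ψ e * ψ x * ψ f = 0 := by
      rw [hxIm, show ψ e * (ψ e * ψ x * ψ e) * ψ f = (ψ e * ψ e) * ψ x * (ψ e * ψ f)
        by simp only [mul_assoc], hEF, mul_zero]
    have hEFy : ψ e * ψ y * ψ f = 0 := by
      rw [hyIm, show ψ e * (ψ e * ψ y * ψ e) * ψ f = (ψ e * ψ e) * ψ y * (ψ e * ψ f)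
        by simp only [mul_assoc], hEF, mul_zero]
    have hFEx : ψ f * ψ x * ψ e = 0 := by
      rw [hxIm, show ψ f * (ψ e * ψ x * ψ e) * ψ e = (ψ f * ψ e) * (ψ x * ψ e * ψ e)
        by simp only [mul_assoc], hFE, zero_mul]
    have hFEy : ψ f * ψ y * ψ e = 0 := by
      rw [hyIm, show ψ f * (ψ e * ψ y * ψ e) * ψ e = (ψ f * ψ e) * (ψ y * ψ e * ψ e)
        by simp only [mul_assoc], hFE, zero_mul]
    have h22 : f * t * f = 0 := by
      apply hinj
      rw [hcorner f t hfS hfM htS, ht, hzero, mul_add, add_mul, hFx, hFy, add_zero]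
    have hofft : e * t * f + f * t * e = 0 := by
      apply hinj
      rw [hoffc t htS, ht, hzero, mul_add, add_mul, mul_add, add_mul,
        hEFx, hEFy, hFEx, hFEy]
      abel
    have htc : t = e * t * e := by
      have hexp : (e + f) * t * (e + f)
          = e * t * e + (e * t * f + f * t * e) + f * t * f := by noncomm_ring
      rw [hef1, one_mul, mul_one, hofft, h22, add_zero, add_zero] at hexp
      exact hexp
    have hte : t * e = t := by
      conv_lhs => rw [htc]
      rw [show (e * t * e) * e = e * t * (e * e) by simp only [mul_assoc], heM, ← htc]
    have hxe : x * e = x := c1right x hx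
    have hye : y * e = y := c1right y hy
    have hex : e * x = x := c1left x hx
    have hey : e * y = y := c1left y hy
    -- multiply against arbitrary 1-2 corner elements
    have hkey : ∀ nn : R, e * nn * f = nn → t * nn = x * nn + y * nn := by
      intro nn hnn
      obtain ⟨henn, hnne, hnnf, hfnn⟩ := pbasic e f nn heM hfM hef hfe hnn
      have hnt : nn * t = 0 := by
        conv_lhs => rw [htc]
        rw [show nn * (e * t * e) = (nn * e) * (t * e) by simp only [mul_assoc], hnne, zero_mul]
      have hnx : nn * x = 0 := by
        conv_lhs => rw [← hx]
        rw [show nn * (e * x * e) = (nn * e) * (x * e) by simp only [mul_assoc], hnne, zero_mul]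
      have hny : nn * y = 0 := by
        conv_lhs => rw [← hy]
        rw [show nn * (e * y * e) = (nn * e) * (y * e) by simp only [mul_assoc], hnne, zero_mul]
      have hJt := hjord t nn htS
      rw [hnt, add_zero, ht] at hJt
      have hJx := hjord x nn hxS; rw [hnx, add_zero] at hJx
      have hJy := hjord y nn hyS; rw [hny, add_zero] at hJy
      have hx12 : e * (x * nn) * f = x * nn := by
        rw [show e * (x * nn) * f = (e * x) * (nn * f) by simp only [mul_assoc], hex, hnnf]
      have hy12 : e * (y * nn) * f = y * nn := by
        rw [show e * (y * nn) * f = (e * y) * (nn * f) by simp only [mul_assoc], hey, hnnf]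
      have hc : ψ (t * nn) = ψ (x * nn + y * nn) := by
        rw [hJt, hadd12 _ _ hx12 hy12, hJx, hJy]
        simp only [add_mul, mul_add]
        abel
      exact hinj hc
    -- conclude via primeness
    have hd : ∀ z : R, (t - x - y) * z * f = 0 := by
      intro z
      have h12 : e * (e * z * f) * f = e * z * f := by
        rw [show e * (e * z * f) * f = (e * e) * z * (f * f) by simp only [mul_assoc], heM, hfM]
      have hsub : (t - x - y) * e = t - x - y := by
        rw [sub_mul, sub_mul, hte, hxe, hye]
      calc (t - x - y) * z * f = (t - x - y) * (e * z * f) := by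
            conv_lhs => rw [← hsub]
            simp only [mul_assoc]
        _ = t * (e * z * f) - x * (e * z * f) - y * (e * z * f) := by
            rw [sub_mul, sub_mul]
        _ = 0 := by rw [hkey (e * z * f) h12]; abel
    have hd0 : t - x - y = 0 := hPf _ hd
    have ht' : t = x + y := by
      have h2 : t - (x + y) = 0 := by rw [← hd0]; abel
      have := sub_eq_zero.mp h2; exact this
    rw [← ht', ht]
  have hadd22 : ∀ x y : R, star x = x → star y = y → f * x * f = x → f * y * f = y →
      ψ (x + y) = ψ x + ψ y := by
    intro x y hxS hyS hx hy
    obtain ⟨t, ht⟩ := hsurj (ψ x + ψ y)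
    have htS : star t = t := hinj (by rw [hstar, ht, star_add, hsa x hxS, hsa y hyS])
    have hxIm : ψ x = ψ f * ψ x * ψ f := by
      have h2 := hcorner f x hfS hfM hxS
      rw [hx] at h2; exact h2
    have hyIm : ψ y = ψ f * ψ y * ψ f := by
      have h2 := hcorner f y hfS hfM hyS
      rw [hy] at h2; exact h2
    have hFx : ψ e * ψ x * ψ e = 0 := by
      rw [hxIm, show ψ e * (ψ f * ψ x * ψ f) * ψ e = (ψ e * ψ f) * (ψ x * ψ f * ψ e)
        by simp only [mul_assoc], hEF, zero_mul]
    have hFy : ψ e * ψ y * ψ e = 0 := by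
      rw [hyIm, show ψ e * (ψ f * ψ y * ψ f) * ψ e = (ψ e * ψ f) * (ψ y * ψ f * ψ e)
        by simp only [mul_assoc], hEF, zero_mul]
    have hEFx : ψ e * ψ x * ψ f = 0 := by
      rw [hxIm, show ψ e * (ψ f * ψ x * ψ f) * ψ f = (ψ e * ψ f) * (ψ x * ψ f * ψ f)
        by simp only [mul_assoc], hEF, zero_mul]
    have hEFy : ψ e * ψ y * ψ f = 0 := by
      rw [hyIm, show ψ e * (ψ f * ψ y * ψ f) * ψ f = (ψ e * ψ f) * (ψ y * ψ f * ψ f)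
        by simp only [mul_assoc], hEF, zero_mul]
    have hFEx : ψ f * ψ x * ψ e = 0 := by
      rw [hxIm, show ψ f * (ψ f * ψ x * ψ f) * ψ e = (ψ f * ψ f) * ψ x * (ψ f * ψ e)
        by simp only [mul_assoc], hFE, mul_zero]
    have hFEy : ψ f * ψ y * ψ e = 0 := by
      rw [hyIm, show ψ f * (ψ f * ψ y * ψ f) * ψ e = (ψ f * ψ f) * ψ y * (ψ f * ψ e)
        by simp only [mul_assoc], hFE, mul_zero]
    have h11 : e * t * e = 0 := by
      apply hinj
      rw [hcorner e t heS heM htS, ht, hzero, mul_add, add_mul, hFx, hFy, add_zero]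
    have hofft : e * t * f + f * t * e = 0 := by
      apply hinj
      rw [hoffc t htS, ht, hzero, mul_add, add_mul, mul_add, add_mul,
        hEFx, hEFy, hFEx, hFEy]
      abel
    have htc : t = f * t * f := by
      have hexp : (e + f) * t * (e + f)
          = e * t * e + (e * t * f + f * t * e) + f * t * f := by noncomm_ring
      rw [hef1, one_mul, mul_one, hofft, h11] at hexp
      simp only [zero_add, add_zero] at hexp
      exact hexp
    have hte : t * f = t := by
      conv_lhs => rw [htc]
      rw [show (f * t * f) * f = f * t * (f * f) by simp only [mul_assoc], hfM, ← htc]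
    have hxe : x * f = x := c2right x hx
    have hye : y * f = y := c2right y hy
    have hex : f * x = x := c2left x hx
    have hey : f * y = y := c2left y hy
    have hkey : ∀ nn : R, f * nn * e = nn → t * nn = x * nn + y * nn := by
      intro nn hnn
      obtain ⟨hfnn, hnnf, hnne, henn⟩ := pbasic f e nn hfM heM hfe hef hnn
      have hnt : nn * t = 0 := by
        conv_lhs => rw [htc]
        rw [show nn * (f * t * f) = (nn * f) * (t * f) by simp only [mul_assoc], hnnf, zero_mul]
      have hnx : nn * x = 0 := by
        conv_lhs => rw [← hx]
        rw [show nn * (f * x * f) = (nn * f) * (x * f) by simp only [mul_assoc], hnnf, zero_mul]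
      have hny : nn * y = 0 := by
        conv_lhs => rw [← hy]
        rw [show nn * (f * y * f) = (nn * f) * (y * f) by simp only [mul_assoc], hnnf, zero_mul]
      have hJt := hjord t nn htS
      rw [hnt, add_zero, ht] at hJt
      have hJx := hjord x nn hxS; rw [hnx, add_zero] at hJx
      have hJy := hjord y nn hyS; rw [hny, add_zero] at hJy
      have hx21 : f * (x * nn) * e = x * nn := by
        rw [show f * (x * nn) * e = (f * x) * (nn * e) by simp only [mul_assoc], hex, hnne]
      have hy21 : f * (y * nn) * e = y * nn := by
        rw [show f * (y * nn) * e = (f * y) * (nn * e) by simp only [mul_assoc], hey, hnne]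
      have hc : ψ (t * nn) = ψ (x * nn + y * nn) := by
        rw [hJt, hadd21 _ _ hx21 hy21, hJx, hJy]
        simp only [add_mul, mul_add]
        abel
      exact hinj hc
    have hd : ∀ z : R, (t - x - y) * z * e = 0 := by
      intro z
      have h21 : f * (f * z * e) * e = f * z * e := by
        rw [show f * (f * z * e) * e = (f * f) * z * (e * e) by simp only [mul_assoc], hfM, heM]
      have hsub : (t - x - y) * f = t - x - y := by
        rw [sub_mul, sub_mul, hte, hxe, hye]
      calc (t - x - y) * z * e = (t - x - y) * (f * z * e) := by
            conv_lhs => rw [← hsub]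
            simp only [mul_assoc]
        _ = t * (f * z * e) - x * (f * z * e) - y * (f * z * e) := by
            rw [sub_mul, sub_mul]
        _ = 0 := by rw [hkey (f * z * e) h21]; abel
    have hd0 : t - x - y = 0 := hPe _ hd
    have ht' : t = x + y := by
      have h2 : t - (x + y) = 0 := by rw [← hd0]; abel
      exact sub_eq_zero.mp h2
    rw [← ht', ht]
  -- additivity of off-diagonal selfadjoint elements
  have hoffadd : ∀ o o' : R, star o = o → star o' = o' →
      e * o * f + f * o * e = o → e * o' * f + f * o' * e = o' →
      ψ (o + o') = ψ o + ψ o' := by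
    intro o o' hS hS' h h'
    have hmc : e * (e * o * f) * f = e * o * f := by
      rw [show e * (e * o * f) * f = (e * e) * o * (f * f) by simp only [mul_assoc], heM, hfM]
    have hnc : e * (e * o' * f) * f = e * o' * f := by
      rw [show e * (e * o' * f) * f = (e * e) * o' * (f * f) by simp only [mul_assoc], heM, hfM]
    have hsm : star (e * o * f) = f * o * e := by
      simp only [star_mul, heS, hfS, hS]
      rw [← mul_assoc]
    have hsn : star (e * o' * f) = f * o' * e := by
      simp only [star_mul, heS, hfS, hS']
      rw [← mul_assoc]
    have ho : o = e * o * f + star (e * o * f) := by rw [hsm]; exact h.symm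
    have ho' : o' = e * o' * f + star (e * o' * f) := by rw [hsn]; exact h'.symm
    have hsum : o + o' = (e * o * f + e * o' * f) + star (e * o * f + e * o' * f) := by
      conv_lhs => rw [ho, ho']
      rw [star_add]; abel
    calc ψ (o + o')
        = ψ ((e * o * f + e * o' * f) + star (e * o * f + e * o' * f)) := by rw [← hsum]
      _ = ψ (e * o * f + e * o' * f) + star (ψ (e * o * f + e * o' * f)) := hst1 _
      _ = (ψ (e * o * f) + ψ (e * o' * f)) + star (ψ (e * o * f) + ψ (e * o' * f)) := by
          rw [hadd12 _ _ hmc hnc]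
      _ = (ψ (e * o * f) + star (ψ (e * o * f)))
          + (ψ (e * o' * f) + star (ψ (e * o' * f))) := by rw [star_add]; abel
      _ = ψ o + ψ o' := by rw [← hst1, ← hst1, ← ho, ← ho']
  -- additivity for selfadjoint elements
  have haddsa : ∀ u v : R, star u = u → star v = v → ψ (u + v) = ψ u + ψ v := by
    intro u v hu hv
    have s1 : ∀ w : R, star w = w → star (e * w * e) = e * w * e := by
      intro w hw
      simp only [star_mul, heS, hw]
      rw [← mul_assoc]
    have s2 : ∀ w : R, star w = w → star (f * w * f) = f * w * f := by
      intro w hw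
      simp only [star_mul, hfS, hw]
      rw [← mul_assoc]
    have s0 : ∀ w : R, star w = w → star (e * w * f + f * w * e) = e * w * f + f * w * e := by
      intro w hw
      simp only [star_add, star_mul, heS, hfS, hw]
      rw [← mul_assoc, ← mul_assoc, add_comm]
    have d1 : ∀ w : R, e * (e * w * e) * e = e * w * e := by
      intro w
      rw [show e * (e * w * e) * e = (e * e) * w * (e * e) by simp only [mul_assoc], heM]
    have d2 : ∀ w : R, f * (f * w * f) * f = f * w * f := by
      intro w
      rw [show f * (f * w * f) * f = (f * f) * w * (f * f) by simp only [mul_assoc], hfM]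
    have d0 : ∀ w : R, e * (e * w * f + f * w * e) * f + f * (e * w * f + f * w * e) * e
        = e * w * f + f * w * e := by
      intro w
      simp only [mul_add, add_mul]
      rw [show e * (e * w * f) * f = (e * e) * w * (f * f) by simp only [mul_assoc], heM, hfM,
        show e * (f * w * e) * f = (e * f) * (w * (e * f)) by simp only [mul_assoc], hef,
        show f * (e * w * f) * e = (f * e) * (w * (f * e)) by simp only [mul_assoc], hfe,
        show f * (f * w * e) * e = (f * f) * w * (e * e) by simp only [mul_assoc], hfM, heM]
      simp only [zero_mul, mul_zero, add_zero, zero_add]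
    have huv : star (u + v) = u + v := by rw [star_add, hu, hv]
    have e11 : e * (u + v) * e = e * u * e + e * v * e := by
      rw [mul_add, add_mul]
    have e22 : f * (u + v) * f = f * u * f + f * v * f := by
      rw [mul_add, add_mul]
    have e00 : e * (u + v) * f + f * (u + v) * e
        = (e * u * f + f * u * e) + (e * v * f + f * v * e) := by
      simp only [mul_add, add_mul]; abel
    rw [hdecomp (u + v) huv, e11, e22, e00]
    rw [hadd11 _ _ (s1 u hu) (s1 v hv) (d1 u) (d1 v),
      hadd22 _ _ (s2 u hu) (s2 v hv) (d2 u) (d2 v),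
      hoffadd _ _ (s0 u hu) (s0 v hv) (d0 u) (d0 v)]
    rw [hdecomp u hu, hdecomp v hv]
    abel
  -- full additivity
  have haddall : ∀ x y : R, ψ (x + y) = ψ x + ψ y := by
    intro x y
    obtain ⟨hAxS, hBxS, hxdec, hxps⟩ := split x
    obtain ⟨hAyS, hByS, hydec, hyps⟩ := split y
    have hsum : x + y = ((2⁻¹:ℂ) • (x + star x) + (2⁻¹:ℂ) • (y + star y))
        + Complex.I • ((-Complex.I) • ((2⁻¹:ℂ) • (x - star x))
          + (-Complex.I) • ((2⁻¹:ℂ) • (y - star y))) := by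
      conv_lhs => rw [hxdec, hydec]
      simp only [smul_add]; abel
    have hAsum : star ((2⁻¹:ℂ) • (x + star x) + (2⁻¹:ℂ) • (y + star y))
        = (2⁻¹:ℂ) • (x + star x) + (2⁻¹:ℂ) • (y + star y) := by
      rw [star_add, hAxS, hAyS]
    have hBsum : star ((-Complex.I) • ((2⁻¹:ℂ) • (x - star x))
          + (-Complex.I) • ((2⁻¹:ℂ) • (y - star y)))
        = (-Complex.I) • ((2⁻¹:ℂ) • (x - star x))
          + (-Complex.I) • ((2⁻¹:ℂ) • (y - star y)) := by
      rw [star_add, hBxS, hByS]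
    have hIBsk : star (Complex.I • ((-Complex.I) • ((2⁻¹:ℂ) • (x - star x))
          + (-Complex.I) • ((2⁻¹:ℂ) • (y - star y))))
        = -(Complex.I • ((-Complex.I) • ((2⁻¹:ℂ) • (x - star x))
          + (-Complex.I) • ((2⁻¹:ℂ) • (y - star y)))) := by
      rw [star_smul, hBsum, Complex.star_def, Complex.conj_I, neg_smul]
    rw [hsum, haddss _ _ hAsum hIBsk, hsmul,
      haddsa _ _ hAxS hAyS, haddsa _ _ hBxS hByS, hxps, hyps]
    simp only [smul_add]
    abel
  -- full multiplicativity
  have hmulall : ∀ x y : R, ψ (x * y) = ψ x * ψ y := by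
    intro x y
    have h1 := hdia x y
    have h2 := hlie x y
    have h3 : ψ (x * y + y * star x) + ψ (x * y - y * star x) = (2:ℂ) • (ψ x * ψ y) := by
      rw [h1, h2, two_smul]; abel
    rw [← haddall] at h3
    have harg : (x * y + y * star x) + (x * y - y * star x) = (2:ℂ) • (x * y) := by
      rw [two_smul]; abel
    rw [harg, hsmul] at h3
    exact csmul_inj two_ne_zero h3
  exact ⟨haddall, hmulall, hstar⟩

end Helpers

section PV
variable {R : Type*} [Ring R] [StarRing R] [Algebra ℂ R] [StarModule ℂ R]

private def Zvec (R : Type*) [Ring R] [Algebra ℂ R] (k : ℕ) : Fin (k+1) → R :=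
  fun j => if (j:ℕ) = 0 then Complex.I • (1:R) else 1

private def Yvec (k : ℕ) (y : R) : Fin (k+2) → R :=
  fun j => if (j:ℕ) = k+1 then y else if (j:ℕ) = 0 then Complex.I • (1:R) else 1

private def Xvec (k : ℕ) (y z : R) : Fin (k+3) → R :=
  fun j => if (j:ℕ) = k+2 then z else if (j:ℕ) = k+1 then y
    else if (j:ℕ) = 0 then Complex.I • (1:R) else 1

private lemma star_scalar_one (c : ℂ) : star (c • (1:R)) = (starRingEnd ℂ c) • (1:R) := by
  rw [star_smul, star_one, Complex.star_def]

private lemma Zcast (k : ℕ) : (fun i : Fin (k+1) => Zvec R (k+1) i.castSucc) = Zvec R k := by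
  funext j
  simp [Zvec]

private lemma Ycast (k : ℕ) (y : R) :
    (fun i : Fin (k+1) => Yvec k y i.castSucc) = Zvec R k := by
  funext j
  have hj : (j : ℕ) < k + 1 := j.isLt
  simp only [Yvec, Zvec, Fin.coe_castSucc]
  rw [if_neg (by omega)]

private lemma Xcast (k : ℕ) (y z : R) :
    (fun i : Fin (k+2) => Xvec k y z i.castSucc) = Yvec k y := by
  funext j
  have hj : (j : ℕ) < k + 2 := j.isLt
  simp only [Xvec, Yvec, Fin.coe_castSucc]
  rw [if_neg (by omega)]

private lemma pvec_Z (k : ℕ) : pvec k (Zvec R k) = ((2:ℂ)^k * Complex.I) • (1:R) := by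
  induction k with
  | zero => simp [pvec, Zvec]
  | succ k ih =>
    have hlast : Zvec R (k+1) (Fin.last (k+1)) = 1 := by
      simp [Zvec, Fin.last]
    rw [show pvec (k+1) (Zvec R (k+1))
        = starLie (pvec k (fun i => Zvec R (k+1) i.castSucc)) (Zvec R (k+1) (Fin.last (k+1)))
      from rfl, Zcast, ih, hlast]
    unfold starLie
    rw [one_mul, star_scalar_one, mul_one]
    rw [← sub_smul]
    congr 1
    simp only [map_mul, map_pow, map_ofNat, Complex.conj_I]
    ring

private lemma pvec_Y (k : ℕ) (y : R) :
    pvec (k+1) (Yvec k y) = ((2:ℂ)^(k+1) * Complex.I) • y := by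
  have hlast : Yvec k y (Fin.last (k+1)) = y := by
    simp [Yvec, Fin.last]
  rw [show pvec (k+1) (Yvec k y)
      = starLie (pvec k (fun i => Yvec k y i.castSucc)) (Yvec k y (Fin.last (k+1)))
    from rfl, Ycast, pvec_Z, hlast]
  unfold starLie
  rw [star_scalar_one, smul_mul_assoc, one_mul, mul_smul_comm, mul_one]
  rw [← sub_smul]
  congr 1
  simp only [map_mul, map_pow, map_ofNat, Complex.conj_I]
  ring

private lemma pvec_X (k : ℕ) (y z : R) :
    pvec (k+2) (Xvec k y z) = ((2:ℂ)^(k+1) * Complex.I) • (y * z + z * star y) := by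
  have hlast : Xvec k y z (Fin.last (k+2)) = z := by
    simp [Xvec, Fin.last]
  rw [show pvec (k+2) (Xvec k y z)
      = starLie (pvec (k+1) (fun i => Xvec k y z i.castSucc)) (Xvec k y z (Fin.last (k+2)))
    from rfl, Xcast, pvec_Y, hlast]
  unfold starLie
  rw [star_smul, smul_mul_assoc, mul_smul_comm]
  rw [show (star ((2:ℂ)^(k+1) * Complex.I) : ℂ) = -((2:ℂ)^(k+1) * Complex.I) from by
    rw [Complex.star_def]; simp only [map_mul, map_pow, map_ofNat, Complex.conj_I]; ring]
  rw [neg_smul, sub_neg_eq_add, smul_add]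

end PV

open scoped InnerProductSpace ComplexConjugate

private theorem vn_prime {H : Type*} [NormedAddCommGroup H] [InnerProductSpace ℂ H]
    [CompleteSpace H] (M : VonNeumannAlgebra H)
    (hfactor : ∀ z ∈ M, (∀ a ∈ M, z * a = a * z) → ∃ c : ℂ, z = c • (1 : H →L[ℂ] H))
    (p : H →L[ℂ] H) (hpM : p ∈ M) (hp : p ≠ 0) :
    ∀ c : H →L[ℂ] H, (∀ z ∈ M, c * z * p = 0) → c = 0 := by
  intro c hc
  set S : Set H := {v | ∃ z ∈ M, ∃ ξ, z (p ξ) = v} with hS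
  set K0 : Submodule ℂ H := Submodule.span ℂ S with hK0
  set K : Submodule ℂ H := K0.topologicalClosure with hK
  haveI : CompleteSpace K := K0.isClosed_topologicalClosure.completeSpace_coe
  set P : H →L[ℂ] H := K.subtypeL.comp (K.orthogonalProjectionOnto) with hP
  have hPmem : ∀ v, P v ∈ K := fun v => (K.orthogonalProjectionOnto v).2
  have hPid : ∀ v ∈ K, P v = v := by
    intro v hv
    show (↑(K.orthogonalProjectionOnto v) : H) = v
    rw [show v = ((⟨v, hv⟩ : K) : H) from rfl, Submodule.orthogonalProjectionOnto_mem_subspace_eq_self]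
  have hPperp : ∀ v, v - P v ∈ Kᗮ := fun v => Submodule.sub_starProjection_mem_orthogonal (K := K) v
  -- invariance from generators
  have hinv : ∀ T : H →L[ℂ] H, (∀ s ∈ S, T s ∈ K0) → ∀ v ∈ K, T v ∈ K := by
    intro T hTS v hv
    have h1 : ∀ w ∈ K0, T w ∈ K0 := by
      intro w hw
      have h2 : T w ∈ K0.map (T : H →ₗ[ℂ] H) :=
        Submodule.mem_map_of_mem hw
      rw [hK0, Submodule.map_span] at h2
      refine Submodule.span_le.mpr ?_ h2
      rintro _ ⟨sElt, hs, rfl⟩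
      exact hTS _ hs
    have h3 : v ∈ closure (K0 : Set H) := by
      rw [← Submodule.topologicalClosure_coe]; exact hv
    have h4 : T v ∈ closure (K0 : Set H) :=
      map_mem_closure T.continuous h3 (fun w hw => h1 w hw)
    rw [← Submodule.topologicalClosure_coe] at h4
    exact h4
  -- commuting criterion
  have hcomm : ∀ T : H →L[ℂ] H, (∀ v ∈ K, T v ∈ K) → (∀ v ∈ K, (star T) v ∈ K) →
      T * P = P * T := by
    intro T hT hT'
    ext v
    simp only [ContinuousLinearMap.mul_apply]
    have h1 : P (T (P v)) = T (P v) := hPid _ (hT _ (hPmem v))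
    have hperp : T (v - P v) ∈ Kᗮ := by
      rw [Submodule.mem_orthogonal]
      intro u hu
      have h5 : ⟪u, T (v - P v)⟫_ℂ = ⟪(ContinuousLinearMap.adjoint T) u, v - P v⟫_ℂ :=
        (ContinuousLinearMap.adjoint_inner_left T _ _).symm
      rw [h5]
      have h6 : (ContinuousLinearMap.adjoint T) u ∈ K := by
        have := hT' u hu
        rwa [ContinuousLinearMap.star_eq_adjoint] at this
      exact (Submodule.mem_orthogonal K _).1 (hPperp v) _ h6
    have h2 : P (T (v - P v)) = 0 := by
      show (↑(K.orthogonalProjectionOnto (T (v - P v))) : H) = 0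
      rw [Submodule.orthogonalProjectionOnto_apply_of_mem_orthogonal hperp]
      rfl
    have hdecompv : T v = T (P v) + T (v - P v) := by rw [← map_add]; congr 1; abel
    symm
    calc P (T v) = P (T (P v)) + P (T (v - P v)) := by rw [hdecompv, map_add]
      _ = T (P v) := by rw [h1, h2, add_zero]
  -- generator stability
  have hMS : ∀ z : H →L[ℂ] H, z ∈ M → ∀ s ∈ S, z s ∈ K0 := by
    intro z hz s hs
    obtain ⟨w, hw, ξ, rfl⟩ := hs
    apply Submodule.subset_span
    exact ⟨z * w, mul_mem hz hw, ξ, rfl⟩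
  have hM'S : ∀ T ∈ Set.centralizer (M : Set (H →L[ℂ] H)), ∀ s ∈ S, T s ∈ K0 := by
    intro T hT s hs
    obtain ⟨w, hw, ξ, rfl⟩ := hs
    apply Submodule.subset_span
    refine ⟨w, hw, T ξ, ?_⟩
    have hwp : (w * p) ∈ M := mul_mem hw hpM
    have := hT (w * p) hwp
    -- (w*p) * T = T * (w*p)
    have h7 := congrArg (fun (A : H →L[ℂ] H) => A ξ) this
    simpa [ContinuousLinearMap.mul_apply] using h7
  have hstarcen : ∀ T ∈ Set.centralizer (M : Set (H →L[ℂ] H)),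
      star T ∈ Set.centralizer (M : Set (H →L[ℂ] H)) := by
    intro T hT m hm
    have h1 := hT (star m) (star_mem hm)
    calc m * star T = star (T * star m) := by rw [star_mul, star_star]
      _ = star (star m * T) := by rw [h1]
      _ = star T * m := by rw [star_mul, star_star]
  have hPM : P ∈ M := by
    have h8 : P ∈ Set.centralizer (Set.centralizer (M : Set (H →L[ℂ] H))) := by
      intro T hT
      exact hcomm T (hinv T (hM'S T hT)) (hinv (star T) (hM'S (star T) (hstarcen T hT)))
    rwa [M.centralizer_centralizer] at h8
  have hPcomm : ∀ a ∈ M, P * a = a * P := by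
    intro a ha
    exact (hcomm a (hinv a (hMS a ha)) (hinv (star a) (hMS (star a) (star_mem ha)))).symm
  obtain ⟨c0, hc0⟩ := hfactor P hPM hPcomm
  obtain ⟨ξ0, hξ0⟩ : ∃ ξ, p ξ ≠ 0 := by
    by_contra h
    push_neg at h
    exact hp (ContinuousLinearMap.ext h)
  have hpK : p ξ0 ∈ K := by
    apply K0.le_topologicalClosure
    apply Submodule.subset_span
    exact ⟨1, one_mem M, ξ0, by simp⟩
  have hPp : P (p ξ0) = p ξ0 := hPid _ hpK
  have hc01 : c0 = 1 := by
    have h9 : c0 • (p ξ0) = p ξ0 := by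
      have := congrArg (fun (A : H →L[ℂ] H) => A (p ξ0)) hc0
      simp only [ContinuousLinearMap.smul_apply, ContinuousLinearMap.one_apply] at this
      rw [← this, hPp]
    have h10 : (c0 - 1) • (p ξ0) = 0 := by
      rw [sub_smul, one_smul, h9, sub_self]
    rcases smul_eq_zero.mp h10 with h | h
    · exact sub_eq_zero.mp h
    · exact absurd h hξ0
  have hKtop : ∀ v : H, v ∈ K := by
    intro v
    have h11 : P v = v := by
      rw [hc0, hc01, one_smul]
      rfl
    rw [← h11]
    exact hPmem v
  have hcK0 : K0 ≤ LinearMap.ker (c : H →ₗ[ℂ] H) := by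
    rw [hK0]
    apply Submodule.span_le.mpr
    rintro _ ⟨w, hw, ξ, rfl⟩
    have h12 := congrArg (fun (A : H →L[ℂ] H) => A ξ) (hc w hw)
    simpa [ContinuousLinearMap.mul_apply] using h12
  have hcK : ∀ v ∈ K, c v = 0 := by
    intro v hv
    have h13 : v ∈ closure (K0 : Set H) := by
      rw [← Submodule.topologicalClosure_coe]; exact hv
    have h14 : (K0 : Set H) ⊆ (c ⁻¹' {0} : Set H) := fun w hw => hcK0 hw
    have h15 : closure (K0 : Set H) ⊆ (c ⁻¹' {0}) :=
      closure_minimal h14 (IsClosed.preimage c.continuous isClosed_singleton)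
    exact h15 h13
  ext v
  simpa using hcK v (hKtop v)


theorem stmt19
    {H : Type*} [NormedAddCommGroup H] [InnerProductSpace ℂ H] [CompleteSpace H]
    (M : VonNeumannAlgebra H)
    (hfactor : ∀ z ∈ M, (∀ a ∈ M, z * a = a * z) → ∃ c : ℂ, z = c • (1 : H →L[ℂ] H))
    (hproj : ∃ p : M.toStarSubalgebra, p ≠ 0 ∧ p ≠ 1 ∧ star p = p ∧ p * p = p)
    (m : ℕ)
    (φ : M.toStarSubalgebra → M.toStarSubalgebra) (hbij : Function.Bijective φ) (hunit : φ 1 = 1)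
    (hsmul : ∀ (c : ℂ) (a : M.toStarSubalgebra), φ (c • a) = c • φ a) :
    (∀ x : Fin (m + 2) → M.toStarSubalgebra, φ (pvec (m + 1) x) = pvec (m + 1) (fun i => φ (x i))) ↔
      ((∀ a b : M.toStarSubalgebra, φ (a + b) = φ a + φ b) ∧ (∀ a b : M.toStarSubalgebra, φ (a * b) = φ a * φ b) ∧
        (∀ a : M.toStarSubalgebra, φ (star a) = star (φ a))) := by
  obtain ⟨e, he0, he1, heS, heM⟩ := hproj
  constructor
  · intro hφ
    -- Step 1: the mixed-product identity
    have hSLsm : ∀ y z : M.toStarSubalgebra, starLie (Complex.I • y) z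
        = Complex.I • (y * z + z * star y) := by
      intro y z
      unfold starLie
      rw [smul_mul_assoc, star_smul, Complex.star_def, Complex.conj_I, neg_smul, mul_neg,
        mul_smul_comm, sub_neg_eq_add, smul_add]
    have hdia : ∀ y z : M.toStarSubalgebra,
        φ (y * z + z * star y) = φ y * φ z + φ z * star (φ y) := by
      intro y z
      cases m with
      | zero =>
        have key := hφ (fun i : Fin 2 => if (i : ℕ) = 0 then Complex.I • y else z)
        have h1 : pvec 1 (fun i : Fin 2 => if (i : ℕ) = 0 then Complex.I • y else z)
            = starLie (Complex.I • y) z := by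
          show starLie (if ((Fin.castSucc 0 : Fin 2) : ℕ) = 0 then Complex.I • y else z)
            (if ((Fin.last 1 : Fin 2) : ℕ) = 0 then Complex.I • y else z) = _
          norm_num
        have h2 : pvec 1 (fun i : Fin 2 =>
              φ (if (i : ℕ) = 0 then Complex.I • y else z))
            = starLie (Complex.I • φ y) (φ z) := by
          show starLie (φ (if ((Fin.castSucc 0 : Fin 2) : ℕ) = 0 then Complex.I • y else z))
            (φ (if ((Fin.last 1 : Fin 2) : ℕ) = 0 then Complex.I • y else z)) = _
          norm_num [hsmul]
        rw [h1, h2, hSLsm, hSLsm, hsmul] at key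
        exact csmul_inj Complex.I_ne_zero key
      | succ k =>
        have key := hφ (Xvec k y z)
        have hXc : (fun i => φ (Xvec k y z i)) = Xvec k (φ y) (φ z) := by
          funext j
          simp only [Xvec]
          split_ifs <;> simp [hunit, hsmul]
        rw [hXc, pvec_X, pvec_X, hsmul] at key
        exact csmul_inj
          (mul_ne_zero (pow_ne_zero _ two_ne_zero) Complex.I_ne_zero) key
    -- Step 2: primeness, transported to the subalgebra
    have hPf : ∀ c : M.toStarSubalgebra, (∀ z : M.toStarSubalgebra, c * z * (1 - e) = 0) →
        c = 0 := by
      intro c hc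
      have hfc' : (((1 : M.toStarSubalgebra) - e : M.toStarSubalgebra) : H →L[ℂ] H) ≠ 0 := by
        intro h
        apply he1
        have h2 : (1 : M.toStarSubalgebra) - e = 0 := Subtype.ext h
        exact (sub_eq_zero.mp h2).symm
      have h0 := vn_prime M hfactor (((1 : M.toStarSubalgebra) - e : M.toStarSubalgebra) : H →L[ℂ] H)
        (SetLike.coe_mem _) hfc' (c : H →L[ℂ] H) ?_
      · exact Subtype.ext h0
      · intro z hz
        have h3 := congrArg Subtype.val (hc ⟨z, hz⟩)
        simpa using h3
    have hPe : ∀ c : M.toStarSubalgebra, (∀ z : M.toStarSubalgebra, c * z * e = 0) → c = 0 := by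
      intro c hc
      have hec' : ((e : M.toStarSubalgebra) : H →L[ℂ] H) ≠ 0 := by
        intro h
        exact he0 (Subtype.ext h)
      have h0 := vn_prime M hfactor ((e : M.toStarSubalgebra) : H →L[ℂ] H)
        (SetLike.coe_mem _) hec' (c : H →L[ℂ] H) ?_
      · exact Subtype.ext h0
      · intro z hz
        have h3 := congrArg Subtype.val (hc ⟨z, hz⟩)
        simpa using h3
    exact starlie_core e heS heM hPf hPe φ hbij.1 hbij.2 hunit hsmul hdia
  · rintro ⟨hadd, hmul, hstar⟩ x
    have h0 : φ 0 = 0 := by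
      have h := hadd 0 0
      rw [add_zero] at h
      exact (add_eq_left.mp h.symm)
    have hneg : ∀ w : M.toStarSubalgebra, φ (-w) = -φ w := by
      intro w
      have h := hadd w (-w)
      rw [add_neg_cancel, h0] at h
      exact eq_neg_of_add_eq_zero_right h.symm
    have hsub : ∀ u v : M.toStarSubalgebra, φ (u - v) = φ u - φ v := by
      intro u v
      rw [sub_eq_add_neg, hadd, hneg, sub_eq_add_neg]
    have hSL : ∀ u v : M.toStarSubalgebra, φ (starLie u v) = starLie (φ u) (φ v) := by
      intro u v
      unfold starLie
      rw [hsub, hmul, hmul, hstar]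
    suffices h : ∀ (k : ℕ) (x : Fin (k + 1) → M.toStarSubalgebra),
        φ (pvec k x) = pvec k (fun i => φ (x i)) from h (m + 1) x
    intro k
    induction k with
    | zero => intro x; rfl
    | succ k ih =>
      intro x
      show φ (starLie (pvec k fun i => x i.castSucc) (x (Fin.last (k + 1))))
        = starLie (pvec k fun i => φ (x i.castSucc)) (φ (x (Fin.last (k + 1))))
      rw [hSL, ih]
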